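/- Let Λ > 0 and M ≥ 0. If v : [0,∞) → ℝ is a twice differentiable nonnegative function with Λ v''(y) = (v'(y))² for all y > 0 and v(0) = M, then v is constant, i.e. v(y) = M for all y ≥ 0. -/

import Mathlib

open Set

theorem p_eq_two_constant (Lam M : ℝ) (hLam : 0 < Lam) (hM : 0 ≤ M)
    (v v' v'' : ℝ → ℝ)
    (hd1 : ∀ y ≥ (0 : ℝ), HasDerivAt v (v' y) y)
    (hd2 : ∀ y ≥ (0 : ℝ), HasDerivAt v' (v'' y) y)
    (heq : ∀ y > (0 : ℝ), Lam * v'' y = (v' y) ^ 2)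
    (hnn : ∀ y ≥ (0 : ℝ), 0 ≤ v y)
    (h0 : v 0 = M) :
    ∀ y ≥ (0 : ℝ), v y = M := by
  have hcont' : ContinuousOn v' (Ici 0) := fun y hy =>
    (hd2 y hy).continuousAt.continuousWithinAt
  have hmono : MonotoneOn v' (Ici 0) := by
    apply monotoneOn_of_deriv_nonneg (convex_Ici 0) hcont'
    · intro x hx
      rw [interior_Ici] at hx
      exact ((hd2 x hx.le).differentiableAt).differentiableWithinAt
    · intro x hx
      rw [interior_Ici] at hx
      rw [(hd2 x hx.le).deriv]
      have := heq x hx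
      nlinarith [sq_nonneg (v' x)]
  -- key inverse formula
  have key : ∀ a b : ℝ, 0 < a → a ≤ b → (∀ y ∈ Icc a b, v' y ≠ 0) →
      (v' b)⁻¹ = (v' a)⁻¹ - (b - a) / Lam := by
    intro a b ha hab hne
    set h : ℝ → ℝ := fun y => (v' y)⁻¹ + y / Lam with hh
    have hders : ∀ y ∈ Icc a b, HasDerivAt h 0 y := by
      intro y hy
      have hy0 : (0:ℝ) < y := lt_of_lt_of_le ha hy.1
      have h1 : HasDerivAt (fun y => (v' y)⁻¹) (-(v'' y) / (v' y) ^ 2) y :=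
        (hd2 y hy0.le).inv (hne y hy)
      have h2 : HasDerivAt h (-(v'' y) / (v' y) ^ 2 + 1 / Lam) y := by
        exact h1.add ((hasDerivAt_id y).div_const Lam)
      have h3 : -(v'' y) / (v' y) ^ 2 + 1 / Lam = 0 := by
        have he := heq y hy0
        have hsq : (v' y) ^ 2 ≠ 0 := pow_ne_zero _ (hne y hy)
        rw [div_add_div _ _ hsq hLam.ne', div_eq_zero_iff]
        left
        linarith
      rwa [h3] at h2
    have hc := constant_of_has_deriv_right_zero
      (fun y hy => (hders y hy).continuousAt.continuousWithinAt)
      (fun y hy => ((hders y (Ico_subset_Icc_self hy)).hasDerivWithinAt)) b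
      (right_mem_Icc.mpr hab)
    have hc' : (v' b)⁻¹ + b / Lam = (v' a)⁻¹ + a / Lam := hc
    have hsd := sub_div b a Lam
    linarith
  -- main: v' vanishes on (0,∞)
  have hzero : ∀ a > (0:ℝ), v' a = 0 := by
    intro a ha
    rcases lt_trichotomy (v' a) 0 with hneg | hz | hpos
    · exfalso
      -- step 1: v' stays negative
      have hneglt : ∀ y, a ≤ y → v' y < 0 := by
        by_contra hcon
        push_neg at hcon
        obtain ⟨y₁, hy₁a, hy₁⟩ := hcon
        have hIcc : Icc a y₁ ⊆ Ici (0:ℝ) := fun t ht => le_trans ha.le ht.1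
        obtain ⟨b, hbmem, hb0⟩ : ∃ b ∈ Icc a y₁, v' b = 0 := by
          have him := intermediate_value_Icc hy₁a (hcont'.mono hIcc)
          obtain ⟨b, hb, hb0⟩ := him ⟨hneg.le, hy₁⟩
          exact ⟨b, hb, hb0⟩
        set Z := {y | y ∈ Icc a y₁ ∧ v' y = 0} with hZ
        have hZne : Z.Nonempty := ⟨b, hbmem, hb0⟩
        have hZclosed : IsClosed Z := by
          have : Z = Icc a y₁ ∩ v' ⁻¹' {0} := by
            ext t; simp [hZ, Set.mem_preimage]
          rw [this]
          exact (hcont'.mono hIcc).preimage_isClosed_of_isClosed isClosed_Icc isClosed_singleton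
        have hZbdd : BddBelow Z := ⟨a, fun y hy => hy.1.1⟩
        set c := sInf Z with hcdef
        have hcZ : c ∈ Z := hZclosed.csInf_mem hZne hZbdd
        have hac : a < c := by
          rcases lt_or_eq_of_le hcZ.1.1 with h | h
          · exact h
          · exfalso; rw [← h] at hcZ; exact hneg.ne hcZ.2
        have hne' : ∀ y ∈ Ico a c, v' y < 0 := by
          intro y hy
          rcases lt_trichotomy (v' y) 0 with h | h | h
          · exact h
          · exfalso
            have : y ∈ Z := ⟨⟨hy.1, le_trans hy.2.le hcZ.1.2⟩, h⟩
            exact absurd (csInf_le hZbdd this) (not_le.mpr hy.2)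
          · exfalso
            have hy0 : y ∈ Ici (0:ℝ) := le_trans ha.le hy.1
            have hc0 : c ∈ Ici (0:ℝ) := le_trans ha.le hcZ.1.1
            have := hmono hy0 hc0 hy.2.le
            rw [hcZ.2] at this
            linarith
        set m := (v' a)⁻¹ - (c - a) / Lam with hmdef
        have hm : m < 0 := by
          rw [hmdef]
          have h1 : (v' a)⁻¹ < 0 := inv_lt_zero.mpr hneg
          have h2 : 0 ≤ (c - a) / Lam := div_nonneg (by linarith) hLam.le
          linarith
        have hbound : ∀ y ∈ Ico a c, v' y ≤ m⁻¹ := by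
          intro y hy
          have hform := key a y ha hy.1
            (fun t ht => (hne' t ⟨ht.1, lt_of_le_of_lt ht.2 hy.2⟩).ne)
          have h1 : m ≤ (v' y)⁻¹ := by
            rw [hform, hmdef]
            have : (y - a) / Lam ≤ (c - a) / Lam :=
              div_le_div_of_nonneg_right (by linarith [hy.2.le]) hLam.le
            linarith
          have hvy : (v' y)⁻¹ < 0 := inv_lt_zero.mpr (hne' y hy)
          have := (inv_le_inv_of_neg hvy hm).mpr h1
          rwa [inv_inv] at this
        have hcb : ContinuousWithinAt v' (Ico a c) c :=
          ((hd2 c (le_trans ha.le hcZ.1.1)).continuousAt).continuousWithinAt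
        have hNe : (nhdsWithin c (Ico a c)).NeBot := by
          rw [← mem_closure_iff_nhdsWithin_neBot, closure_Ico hac.ne]
          exact right_mem_Icc.mpr hac.le
        have hle : v' c ≤ m⁻¹ := by
          refine le_of_tendsto hcb ?_
          filter_upwards [eventually_mem_nhdsWithin] with y hy using hbound y hy
        have : m⁻¹ < 0 := inv_lt_zero.mpr hm
        rw [hcZ.2] at hle
        linarith
      -- step 2: explicit formula for v'
      have hform : ∀ y, a ≤ y → v' y = Lam * v' a / (Lam - v' a * (y - a)) := by
        intro y hy
        have hk := key a y ha hy (fun t ht => (hneglt t ht.1).ne)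
        have hva : v' a ≠ 0 := hneg.ne
        have hvy : v' y ≠ 0 := (hneglt y hy).ne
        have hden : 0 < Lam - v' a * (y - a) := by nlinarith
        rw [eq_div_iff hden.ne']
        field_simp at hk
        linarith [hk]
      -- step 3: v goes to -infinity
      set c := -(v' a) with hcdef
      have hc : 0 < c := by simpa [hcdef] using hneg
      set G : ℝ → ℝ := fun y => v y + Lam * Real.log (Lam + c * (y - a)) with hG
      have hGder : ∀ y, a ≤ y → HasDerivAt G 0 y := by
        intro y hy
        have hpos : 0 < Lam + c * (y - a) := by nlinarith
        have hin : HasDerivAt (fun y => Lam + c * (y - a)) c y := by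
          simpa using (((hasDerivAt_id y).sub_const a).const_mul c).const_add Lam
        have hlog : HasDerivAt (fun y => Real.log (Lam + c * (y - a)))
            (c / (Lam + c * (y - a))) y := by
          simpa using hin.log hpos.ne'
        have htot : HasDerivAt G (v' y + Lam * (c / (Lam + c * (y - a)))) y :=
          (hd1 y (le_trans ha.le hy)).add (hlog.const_mul Lam)
        have hval : v' y + Lam * (c / (Lam + c * (y - a))) = 0 := by
          rw [hform y hy]
          have hden : 0 < Lam - v' a * (y - a) := by nlinarith
          have : Lam + c * (y - a) = Lam - v' a * (y - a) := by rw [hcdef]; ring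
          rw [this]
          field_simp
          ring
        rwa [hval] at htot
      -- choose large Y
      set E := v a / Lam + Real.log Lam + 1 with hE
      set Y := a + Real.exp E / c with hY
      have haY : a ≤ Y := by
        have : 0 < Real.exp E / c := div_pos (Real.exp_pos E) hc
        rw [hY]; linarith
      have hGconst : G Y = G a := by
        refine constant_of_has_deriv_right_zero
          (fun y hy => (hGder y hy.1).continuousAt.continuousWithinAt)
          (fun y hy => (hGder y hy.1).hasDerivWithinAt) Y (right_mem_Icc.mpr haY)
      have hYval : Lam + c * (Y - a) = Lam + Real.exp E := by
        rw [hY]; field_simp; ring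
      have hGY : v Y + Lam * Real.log (Lam + c * (Y - a)) = v a + Lam * Real.log Lam := by
        simpa [hG] using hGconst
      have hlogY : E ≤ Real.log (Lam + c * (Y - a)) := by
        rw [hYval]
        calc E = Real.log (Real.exp E) := (Real.log_exp E).symm
        _ ≤ Real.log (Lam + Real.exp E) := by
              apply Real.log_le_log (Real.exp_pos E)
              linarith
      have hmul : Lam * E ≤ Lam * Real.log (Lam + c * (Y - a)) :=
        mul_le_mul_of_nonneg_left hlogY hLam.le
      have hLamE : Lam * E = v a + Lam * Real.log Lam + Lam := by
        rw [hE]; field_simp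
      have hY0 : (0:ℝ) ≤ Y := le_trans ha.le haY
      have hnnY := hnn Y hY0
      linarith
    · exact hz
    · exfalso
      have hpos' : ∀ y, a ≤ y → 0 < v' y := by
        intro y hy
        exact lt_of_lt_of_le hpos (hmono (le_of_lt ha) (le_trans ha.le hy) hy)
      set T := a + Lam * (v' a)⁻¹ with hT
      have haT : a ≤ T := by
        have : 0 < Lam * (v' a)⁻¹ := mul_pos hLam (inv_pos.mpr hpos)
        rw [hT]; linarith
      have hk := key a T ha haT (fun t ht => (hpos' t ht.1).ne')
      have hTz : (v' T)⁻¹ = 0 := by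
        rw [hk, hT]
        field_simp
        ring
      have := inv_pos.mpr (hpos' T haT)
      rw [hTz] at this
      exact lt_irrefl 0 this
  -- conclude v constant
  intro y hy
  have hcv : ContinuousOn v (Ici 0) := fun t ht => (hd1 t ht).continuousAt.continuousWithinAt
  have hdv : DifferentiableOn ℝ v (interior (Ici 0)) := by
    intro x hx
    rw [interior_Ici] at hx
    exact ((hd1 x hx.le).differentiableAt).differentiableWithinAt
  have hd0 : ∀ x ∈ interior (Ici (0:ℝ)), deriv v x = 0 := by
    intro x hx
    rw [interior_Ici] at hx
    rw [(hd1 x hx.le).deriv]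
    exact hzero x hx
  have h1 := monotoneOn_of_deriv_nonneg (convex_Ici 0) hcv hdv (fun x hx => (hd0 x hx).ge)
  have h2 := antitoneOn_of_deriv_nonpos (convex_Ici 0) hcv hdv (fun x hx => (hd0 x hx).le)
  have hA := h1 self_mem_Ici hy hy
  have hB := h2 self_mem_Ici hy hy
  rw [← h0]
  linarith
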